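/- arXiv:1306.4022 — 3 statements merged into one kernel-verified Lean document; each statement's English description precedes it below -/
import Mathlib

section
/- Let G_1,…,G_k be probability distributions on [0,∞), and let n bidders have value distributions F_i = Σ_{t=1}^k p_{i,t} G_t for nonnegative mixture weights with Σ_t p_{i,t} = 1. Then the optimal revenue for the mixture profile is at most the mixture-weighted average of the optimal revenues of the conditioned regular profiles: OPT(F_1,…,F_n) ≤ Σ_{q ∈ {1,…,k}^n} (∏_{i=1}^n p_{i,q_i}) · OPT(G_{q_1},…,G_{q_n}). -/
open MeasureTheory ProbabilityTheory Real Finset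

noncomputable section

/-- A regular distribution: a probability measure on an interval of `[0,∞)` with a
positive continuous density whose virtual value `x - (1 - F(x))/f(x)` is nondecreasing. -/
structure RegularDist where
  μ : Measure ℝ
  prob : IsProbabilityMeasure μ
  supp : Set ℝ
  dens : ℝ → ℝ
  supp_subset : supp ⊆ Set.Ici 0
  supp_interval : supp.OrdConnected
  dens_cont : ContinuousOn dens supp
  dens_pos : ∀ x ∈ supp, 0 < dens x
  dens_zero : ∀ x ∉ supp, dens x = 0
  eq_withDensity : μ = volume.withDensity (fun x => ENNReal.ofReal (dens x))
  regular : MonotoneOn (fun x => x - (1 - (μ (Set.Iic x)).toReal) / dens x) supp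

/-- `F` hazard-rate dominates `G`: the hazard rate of `F` is at most that of `G`
on the intersection of their supports. -/
def HRDominates (F G : RegularDist) : Prop :=
  ∀ x ∈ F.supp ∩ G.supp,
    F.dens x / (1 - (F.μ (Set.Iic x)).toReal) ≤ G.dens x / (1 - (G.μ (Set.Iic x)).toReal)

/-- A dominant-strategy truthful, individually rational single-item mechanism for `n`
bidders with nonnegative values. -/
structure Mechanism (n : ℕ) where
  alloc : (Fin n → ℝ) → Fin n → ℝ
  pay : (Fin n → ℝ) → Fin n → ℝ
  alloc_meas : ∀ i, Measurable fun v => alloc v i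
  pay_meas : ∀ i, Measurable fun v => pay v i
  alloc_bool : ∀ v i, alloc v i = 0 ∨ alloc v i = 1
  alloc_sum_le_one : ∀ v, ∑ i, alloc v i ≤ 1
  pay_nonneg : ∀ v i, 0 ≤ pay v i
  truthful : ∀ v, (∀ i, 0 ≤ v i) → ∀ i b, 0 ≤ b →
    v i * alloc (Function.update v i b) i - pay (Function.update v i b) i ≤
      v i * alloc v i - pay v i
  ir : ∀ v, (∀ i, 0 ≤ v i) → ∀ i, 0 ≤ v i * alloc v i - pay v i

/-- The optimal revenue for `n` independent bidders with value distributions `F i`. -/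
def optRevenue (n : ℕ) (F : Fin n → Measure ℝ) : ℝ :=
  ⨆ M : Mechanism n, ∫ v, ∑ i, M.pay v i ∂(Measure.pi F)

/-- The highest value in a profile. -/
def highest {m : ℕ} (v : Fin m → ℝ) : ℝ := ⨆ i, v i

/-- The second-highest value in a profile (the maximum over pairs of distinct
indices of the smaller of the two values). -/
def secondHighest {m : ℕ} (v : Fin m → ℝ) : ℝ :=
  ⨆ p : {p : Fin m × Fin m // p.1 ≠ p.2}, min (v p.1.1) (v p.1.2)

/-- Expected revenue of the Vickrey auction (no reserve) when the value profile is
distributed according to `μ`. -/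
def vickreyRev {m : ℕ} (μ : Measure (Fin m → ℝ)) : ℝ :=
  ∫ v, secondHighest v ∂μ

/-- Revenue of the Vickrey auction with reserve `r` on the value profile `v`. -/
def vickreyReserve {m : ℕ} (r : ℝ) (v : Fin m → ℝ) : ℝ :=
  if r ≤ highest v then max r (secondHighest v) else 0

end

noncomputable section MixtureHelpers

open MeasureTheory ProbabilityTheory Real Finset

instance mechNonempty (n : ℕ) : Nonempty (Mechanism n) :=
  ⟨{ alloc := fun _ _ => 0, pay := fun _ _ => 0,
     alloc_meas := fun _ => measurable_const, pay_meas := fun _ => measurable_const,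
     alloc_bool := fun _ _ => Or.inl rfl,
     alloc_sum_le_one := fun _ => by simp,
     pay_nonneg := fun _ _ => le_refl 0,
     truthful := fun _ _ _ _ _ => by simp,
     ir := fun _ _ _ => by simp }⟩

lemma Mechanism.pay_le {n : ℕ} (M : Mechanism n) (v : Fin n → ℝ) (hv : ∀ i, 0 ≤ v i)
    (i : Fin n) : M.pay v i ≤ v i := by
  have h := M.ir v hv i
  rcases M.alloc_bool v i with h0 | h1
  · rw [h0] at h; have := M.pay_nonneg v i; nlinarith [hv i]
  · rw [h1] at h; linarith

lemma Mechanism.alloc_nonneg {n : ℕ} (M : Mechanism n) (v : Fin n → ℝ) (i : Fin n) :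
    0 ≤ M.alloc v i := by
  rcases M.alloc_bool v i with h | h <;> simp [h]

def clamp1 (N x : ℝ) : ℝ := max (min x N) 0

lemma clamp1_nonneg (N x : ℝ) : 0 ≤ clamp1 N x := le_max_right _ _

lemma clamp1_le (N x : ℝ) (hN : 0 ≤ N) : clamp1 N x ≤ N := max_le (min_le_right _ _) hN

lemma clamp1_eq {N x : ℝ} (h0 : 0 ≤ x) (hxN : x ≤ N) : clamp1 N x = x := by
  rw [clamp1, min_eq_left hxN, max_eq_left h0]

lemma clamp1_le_self {N x : ℝ} (h0 : 0 ≤ x) : clamp1 N x ≤ x :=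
  max_le (min_le_left _ _) h0

def clampP {n : ℕ} (N : ℝ) (v : Fin n → ℝ) : Fin n → ℝ := fun i => clamp1 N (v i)

lemma clampP_meas {n : ℕ} (N : ℝ) : Measurable (clampP (n := n) N) :=
  measurable_pi_lambda _ fun i =>
    ((measurable_pi_apply i).min measurable_const).max measurable_const

/-- The mechanism `M` run on values clamped to `[0, N]`. -/
def capMech {n : ℕ} (M : Mechanism n) (N : ℝ) (hN : 0 ≤ N) : Mechanism n where
  alloc v := M.alloc (clampP N v)
  pay v := M.pay (clampP N v)
  alloc_meas i := (M.alloc_meas i).comp (clampP_meas N)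
  pay_meas i := (M.pay_meas i).comp (clampP_meas N)
  alloc_bool v i := M.alloc_bool _ i
  alloc_sum_le_one v := M.alloc_sum_le_one _
  pay_nonneg v i := M.pay_nonneg _ i
  truthful := by
    intro v hv i b hb
    set w := clampP N v with hw
    have hwpos : ∀ j, 0 ≤ w j := fun j => clamp1_nonneg _ _
    have hc : (0:ℝ) ≤ min b N := le_min hb hN
    have hupd : clampP N (Function.update v i b) = Function.update w i (min b N) := by
      funext j
      rcases eq_or_ne j i with rfl | h
      · simp [clampP, clamp1, Function.update_self, max_eq_left hc]
      · simp [clampP, hw, Function.update_of_ne h]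
    have hupd_nonneg : ∀ j, 0 ≤ (Function.update w i (min b N)) j := by
      intro j
      rcases eq_or_ne j i with rfl | h
      · simpa using hc
      · simpa [Function.update_of_ne h] using hwpos j
    have h1 := M.truthful w hwpos i (min b N) hc
    have h2 := M.truthful (Function.update w i (min b N)) hupd_nonneg i (w i) (hwpos i)
    rw [Function.update_idem, Function.update_eq_self, Function.update_self] at h2
    rw [hupd]
    have hwi : w i = min (v i) N := by
      simp [hw, clampP, clamp1, max_eq_left (le_min (hv i) hN)]
    rcases le_total (v i) N with hle | hgt
    · have hwv : w i = v i := by rw [hwi, min_eq_left hle]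
      rw [← hwv]; exact h1
    · have hwiN : w i = N := by rw [hwi, min_eq_right hgt]
      have key : 0 ≤ (w i - min b N) *
          (M.alloc w i - M.alloc (Function.update w i (min b N)) i) := by
        nlinarith [h1, h2]
      rcases eq_or_lt_of_le (min_le_right b N) with heq | hlt
      · have hupd2 : Function.update w i (min b N) = w := by
          rw [heq, ← hwiN, Function.update_eq_self]
        rw [hupd2]
      · have hpos : 0 < w i - min b N := by rw [hwiN]; linarith
        have hxb : M.alloc (Function.update w i (min b N)) i ≤ M.alloc w i := by nlinarith
        have hvw : 0 ≤ v i - w i := by rw [hwiN]; linarith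
        nlinarith [h1, mul_le_mul_of_nonneg_left hxb hvw]
  ir := by
    intro v hv i
    have hwpos : ∀ j, 0 ≤ clampP N v j := fun j => clamp1_nonneg _ _
    have h := M.ir (clampP N v) hwpos i
    have halloc := M.alloc_nonneg (clampP N v) i
    have hle : clampP N v i ≤ v i := clamp1_le_self (hv i)
    nlinarith [mul_le_mul_of_nonneg_right hle halloc]

lemma capMech_pay_le {n : ℕ} (M : Mechanism n) (N : ℝ) (hN : 0 ≤ N) (v : Fin n → ℝ)
    (i : Fin n) : (capMech M N hN).pay v i ≤ N := by
  have hwpos : ∀ j, 0 ≤ clampP N v j := fun j => clamp1_nonneg _ _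
  exact (M.pay_le (clampP N v) hwpos i).trans (clamp1_le N (v i) hN)

lemma mix_prob {k : ℕ} (G : Fin k → Measure ℝ) (hGprob : ∀ t, IsProbabilityMeasure (G t))
    (c : Fin k → ℝ) (hc : ∀ t, 0 ≤ c t) (hcsum : ∑ t, c t = 1) :
    IsProbabilityMeasure (∑ t, ENNReal.ofReal (c t) • G t) := by
  constructor
  have hu : ∀ t, G t Set.univ = 1 := fun t => (hGprob t).measure_univ
  simp only [Measure.coe_finset_sum, Finset.sum_apply, Measure.smul_apply, smul_eq_mul, hu,
    mul_one]
  rw [← ENNReal.ofReal_sum_of_nonneg (fun t _ => hc t), hcsum, ENNReal.ofReal_one]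

lemma pi_decomp (n k : ℕ) (G : Fin k → Measure ℝ) (hGprob : ∀ t, IsProbabilityMeasure (G t))
    (p : Fin n → Fin k → ℝ) (hp : ∀ i t, 0 ≤ p i t) (hpsum : ∀ i, ∑ t, p i t = 1)
    (F : Fin n → Measure ℝ) (hF : ∀ i, F i = ∑ t, ENNReal.ofReal (p i t) • G t) :
    Measure.pi F =
      ∑ q : Fin n → Fin k, ENNReal.ofReal (∏ i, p i (q i)) • Measure.pi (fun i => G (q i)) := by
  haveI : ∀ t, IsProbabilityMeasure (G t) := hGprob
  haveI : ∀ i, IsProbabilityMeasure (F i) := fun i => by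
    rw [hF i]; exact mix_prob G hGprob (p i) (hp i) (hpsum i)
  refine Measure.pi_eq fun s hs => ?_
  calc (∑ q : Fin n → Fin k,
        ENNReal.ofReal (∏ i, p i (q i)) • Measure.pi (fun i => G (q i))) (Set.univ.pi s)
      = ∑ q : Fin n → Fin k,
          ENNReal.ofReal (∏ i, p i (q i)) * Measure.pi (fun i => G (q i)) (Set.univ.pi s) := by
        simp [Measure.coe_finset_sum, Finset.sum_apply, Measure.smul_apply, smul_eq_mul]
    _ = ∑ q : Fin n → Fin k, ∏ i, (ENNReal.ofReal (p i (q i)) * G (q i) (s i)) := by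
        refine Finset.sum_congr rfl fun q _ => ?_
        rw [Measure.pi_pi, ENNReal.ofReal_prod_of_nonneg (fun i _ => hp i (q i)),
          ← Finset.prod_mul_distrib]
    _ = ∏ i, ∑ t, ENNReal.ofReal (p i t) * G t (s i) := by
        rw [Finset.prod_univ_sum, Fintype.piFinset_univ]
    _ = ∏ i, F i (s i) := by
        refine Finset.prod_congr rfl fun i _ => ?_
        rw [hF i]
        simp [Measure.coe_finset_sum, Finset.sum_apply, Measure.smul_apply, smul_eq_mul]

lemma ae_nonneg' {m : ℕ} (μ : Fin m → Measure ℝ) [∀ i, SigmaFinite (μ i)]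
    (h : ∀ i, μ i (Set.Iio 0) = 0) : ∀ᵐ v ∂Measure.pi μ, ∀ i, 0 ≤ v i := by
  rw [ae_all_iff]
  intro i
  rw [ae_iff]
  have heq : {v : Fin m → ℝ | ¬ 0 ≤ v i} = Function.eval i ⁻¹' (Set.Iio 0) := by
    ext v; simp [not_le]
  rw [heq, Set.eval_preimage, Measure.pi_pi]
  refine Finset.prod_eq_zero (Finset.mem_univ i) ?_
  simp [h i]

lemma integrable_of_bounded' {n : ℕ} {μ : Measure (Fin n → ℝ)} [IsProbabilityMeasure μ]
    {f : (Fin n → ℝ) → ℝ} (hf : Measurable f) (C : ℝ) (h0 : ∀ v, 0 ≤ f v)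
    (hC : ∀ v, f v ≤ C) : Integrable f μ := by
  refine (integrable_const C).mono' hf.aestronglyMeasurable (ae_of_all _ fun v => ?_)
  rw [Real.norm_eq_abs, abs_of_nonneg (h0 v)]
  exact hC v

end MixtureHelpers

/-- Optimal revenue of a mixture profile is at most the
mixture-weighted average of conditioned optimal revenues: if each `F i` is the
mixture `∑ t, p i t • G t` of probability distributions `G t` on `[0,∞)`, then
`OPT(F_1,…,F_n) ≤ ∑_q (∏ i, p i (q i)) · OPT(G_{q 1},…,G_{q n})`. -/


theorem optRevenue_mixture_le_avg
    (n k : ℕ) (G : Fin k → MeasureTheory.Measure ℝ)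
    (hGprob : ∀ t, MeasureTheory.IsProbabilityMeasure (G t))
    (hGsupp : ∀ t, G t (Set.Iio 0) = 0)
    (p : Fin n → Fin k → ℝ) (hp : ∀ i t, 0 ≤ p i t) (hpsum : ∀ i, ∑ t, p i t = 1)
    (F : Fin n → MeasureTheory.Measure ℝ)
    (hF : ∀ i, F i = ∑ t, ENNReal.ofReal (p i t) • G t) :
    optRevenue n F ≤
      ∑ q : Fin n → Fin k, (∏ i, p i (q i)) * optRevenue n (fun i => G (q i)) := by
  classical
  haveI hGp : ∀ t, MeasureTheory.IsProbabilityMeasure (G t) := hGprob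
  haveI hFp : ∀ i, MeasureTheory.IsProbabilityMeasure (F i) := fun i => by
    rw [hF i]; exact mix_prob G hGprob (p i) (hp i) (hpsum i)
  set W : (Fin n → Fin k) → ℝ := fun q => ∏ i, p i (q i) with hWdef
  have hWnn : ∀ q, 0 ≤ W q := fun q => Finset.prod_nonneg fun i _ => hp i (q i)
  have hdecomp : MeasureTheory.Measure.pi F =
      ∑ q : Fin n → Fin k, ENNReal.ofReal (W q) •
        MeasureTheory.Measure.pi (fun i => G (q i)) :=
    pi_decomp n k G hGprob p hp hpsum F hF
  have hrev_nonneg : ∀ (M : Mechanism n) (μ : MeasureTheory.Measure (Fin n → ℝ)),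
      0 ≤ ∫ v, ∑ i, M.pay v i ∂μ := fun M μ =>
    MeasureTheory.integral_nonneg fun v => Finset.sum_nonneg fun i _ => M.pay_nonneg v i
  have hopt_nonneg : ∀ q : Fin n → Fin k, 0 ≤ optRevenue n (fun i => G (q i)) := fun q =>
    Real.iSup_nonneg fun M => hrev_nonneg M _
  have hRHS : 0 ≤ ∑ q : Fin n → Fin k, W q * optRevenue n (fun i => G (q i)) :=
    Finset.sum_nonneg fun q _ => mul_nonneg (hWnn q) (hopt_nonneg q)
  have hdecomp_int : ∀ M : Mechanism n,
      MeasureTheory.Integrable (fun v => ∑ i, M.pay v i) (MeasureTheory.Measure.pi F) →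
      ∫ v, ∑ i, M.pay v i ∂(MeasureTheory.Measure.pi F) =
        ∑ q : Fin n → Fin k, W q *
          ∫ v, ∑ i, M.pay v i ∂(MeasureTheory.Measure.pi fun i => G (q i)) := by
    intro M hint
    rw [hdecomp] at hint ⊢
    rw [MeasureTheory.integral_finset_sum_measure
      (MeasureTheory.integrable_finset_sum_measure.mp hint)]
    refine Finset.sum_congr rfl fun q _ => ?_
    rw [MeasureTheory.integral_smul_measure, ENNReal.toReal_ofReal (hWnn q), smul_eq_mul]
  by_cases hbdd : ∀ q : Fin n → Fin k, 0 < W q →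
      BddAbove (Set.range fun M : Mechanism n =>
        ∫ v, ∑ i, M.pay v i ∂(MeasureTheory.Measure.pi fun i => G (q i)))
  · refine Real.iSup_le (fun M => ?_) hRHS
    by_cases hint : MeasureTheory.Integrable (fun v => ∑ i, M.pay v i)
        (MeasureTheory.Measure.pi F)
    · rw [hdecomp_int M hint]
      refine Finset.sum_le_sum fun q _ => ?_
      have hWq : (∏ i, p i (q i)) = W q := rfl
      rw [hWq]
      rcases (hWnn q).eq_or_lt with h0 | h0
      · rw [← h0, zero_mul, zero_mul]
      · exact mul_le_mul_of_nonneg_left (le_ciSup (hbdd q h0) M) (hWnn q)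
    · rw [MeasureTheory.integral_undef hint]; exact hRHS
  · push_neg at hbdd
    obtain ⟨q0, hq0pos, hq0⟩ := hbdd
    have hzero : optRevenue n F = 0 := by
      apply Real.iSup_of_not_bddAbove
      rw [not_bddAbove_iff]
      intro c
      rw [not_bddAbove_iff] at hq0
      obtain ⟨y, ⟨M, hMy⟩, hy⟩ := hq0 (max (c / W q0) 0 + 1)
      set μ0 : MeasureTheory.Measure (Fin n → ℝ) :=
        MeasureTheory.Measure.pi (fun i => G (q0 i)) with hμ0
      have hy' : max (c / W q0) 0 + 1 < ∫ v, ∑ i, M.pay v i ∂μ0 := by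
        rw [← hMy] at hy; simpa using hy
      have hfmeas : Measurable fun v => ∑ i, M.pay v i :=
        Finset.measurable_sum _ fun i _ => M.pay_meas i
      have hmax0 : (0:ℝ) ≤ max (c / W q0) 0 := le_max_right _ _
      have hfint : MeasureTheory.Integrable (fun v => ∑ i, M.pay v i) μ0 := by
        by_contra h
        rw [MeasureTheory.integral_undef h] at hy'
        linarith
      set K : ℕ → Set (Fin n → ℝ) :=
        fun N => Set.univ.pi (fun _ => Set.Icc (0:ℝ) (N:ℝ)) with hK
      have hKmeas : ∀ N, MeasurableSet (K N) := fun N =>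
        MeasurableSet.univ_pi fun _ => measurableSet_Icc
      have hconv : Filter.Tendsto
          (fun N : ℕ => ∫ v, (K N).indicator (fun v => ∑ i, M.pay v i) v ∂μ0)
          Filter.atTop (nhds (∫ v, ∑ i, M.pay v i ∂μ0)) := by
        refine MeasureTheory.tendsto_integral_of_dominated_convergence
          (fun v => |∑ i, M.pay v i|)
          (fun N => (hfmeas.indicator (hKmeas N)).aestronglyMeasurable) hfint.abs
          (fun N => MeasureTheory.ae_of_all _ fun v => ?_) ?_
        · simpa [Real.norm_eq_abs] using
            norm_indicator_le_norm_self (s := K N) (fun v => ∑ i, M.pay v i) v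
        · have hae := ae_nonneg' (fun i => G (q0 i)) (fun i => hGsupp (q0 i))
          refine hae.mono fun v hv => ?_
          obtain ⟨N0, hN0⟩ := exists_nat_ge (∑ i, |v i|)
          refine Filter.Tendsto.congr' ?_ tendsto_const_nhds
          filter_upwards [Filter.eventually_ge_atTop N0] with N hNge
          have hvK : v ∈ K N := by
            refine Set.mem_univ_pi.mpr fun i => ⟨hv i, ?_⟩
            calc v i ≤ |v i| := le_abs_self _
              _ ≤ ∑ j, |v j| :=
                  Finset.single_le_sum (f := fun j => |v j|)
                    (fun j _ => abs_nonneg _) (Finset.mem_univ i)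
              _ ≤ (N0:ℝ) := hN0
              _ ≤ (N:ℝ) := Nat.cast_le.mpr hNge
          rw [Set.indicator_of_mem hvK]
      have hev : ∀ᶠ N : ℕ in Filter.atTop,
          max (c / W q0) 0 < ∫ v, (K N).indicator (fun v => ∑ i, M.pay v i) v ∂μ0 :=
        hconv.eventually (eventually_gt_nhds (by linarith))
      obtain ⟨N, hN⟩ := hev.exists
      set M' : Mechanism n := capMech M (N:ℝ) (Nat.cast_nonneg N) with hM'
      refine ⟨_, ⟨M', rfl⟩, ?_⟩
      have hcap_bound : ∀ v, ∑ i, M'.pay v i ≤ ∑ _i : Fin n, (N:ℝ) :=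
        fun v => Finset.sum_le_sum fun i _ => capMech_pay_le M (N:ℝ) (Nat.cast_nonneg N) v i
      have hcap_nn : ∀ v, 0 ≤ ∑ i, M'.pay v i :=
        fun v => Finset.sum_nonneg fun i _ => M'.pay_nonneg v i
      have hcap_meas : Measurable fun v => ∑ i, M'.pay v i :=
        Finset.measurable_sum _ fun i _ => M'.pay_meas i
      haveI hμ0prob : MeasureTheory.IsProbabilityMeasure μ0 := by
        rw [hμ0]; infer_instance
      have hcap_int : MeasureTheory.Integrable (fun v => ∑ i, M'.pay v i)
          (MeasureTheory.Measure.pi F) :=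
        integrable_of_bounded' hcap_meas _ hcap_nn hcap_bound
      have hptwise : ∀ v, (K N).indicator (fun v => ∑ i, M.pay v i) v ≤
          ∑ i, M'.pay v i := by
        intro v
        by_cases hv : v ∈ K N
        · rw [Set.indicator_of_mem hv]
          have hcl : clampP ((N:ℕ):ℝ) v = v := by
            funext j
            have hj := Set.mem_univ_pi.mp hv j
            exact clamp1_eq hj.1 hj.2
          simp only [hM', capMech, hcl, le_refl]
        · rw [Set.indicator_of_notMem hv]; exact hcap_nn v
      have hint_ind : MeasureTheory.Integrable
          ((K N).indicator (fun v => ∑ i, M.pay v i)) μ0 :=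
        hfint.indicator (hKmeas N)
      have hint_capμ0 : MeasureTheory.Integrable (fun v => ∑ i, M'.pay v i) μ0 :=
        integrable_of_bounded' hcap_meas _ hcap_nn hcap_bound
      have h1 : ∫ v, (K N).indicator (fun v => ∑ i, M.pay v i) v ∂μ0 ≤
          ∫ v, ∑ i, M'.pay v i ∂μ0 :=
        MeasureTheory.integral_mono hint_ind hint_capμ0 hptwise
      have h2 : W q0 * ∫ v, ∑ i, M'.pay v i ∂μ0 ≤
          ∑ q : Fin n → Fin k, W q *
            ∫ v, ∑ i, M'.pay v i ∂(MeasureTheory.Measure.pi fun i => G (q i)) :=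
        Finset.single_le_sum
          (f := fun q => W q *
            ∫ v, ∑ i, M'.pay v i ∂(MeasureTheory.Measure.pi fun i => G (q i)))
          (fun q _ => mul_nonneg (hWnn q) (hrev_nonneg _ _)) (Finset.mem_univ q0)
      have h3 := hdecomp_int M' hcap_int
      have hcW : c ≤ W q0 * max (c / W q0) 0 := by
        have hdiv : W q0 * (c / W q0) = c := by
          field_simp
        nlinarith [mul_le_mul_of_nonneg_left (le_max_left (c / W q0) 0) (le_of_lt hq0pos)]
      calc c ≤ W q0 * max (c / W q0) 0 := hcW
        _ < W q0 * ∫ v, (K N).indicator (fun v => ∑ i, M.pay v i) v ∂μ0 :=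
            mul_lt_mul_of_pos_left hN hq0pos
        _ ≤ W q0 * ∫ v, ∑ i, M'.pay v i ∂μ0 :=
            mul_le_mul_of_nonneg_left h1 (hWnn q0)
        _ ≤ ∑ q : Fin n → Fin k, W q *
              ∫ v, ∑ i, M'.pay v i ∂(MeasureTheory.Measure.pi fun i => G (q i)) := h2
        _ = ∫ v, ∑ i, M'.pay v i ∂(MeasureTheory.Measure.pi F) := h3.symm
    rw [hzero]; exact hRHS
end

section
/- Let X_1,…,X_n, Y_1,…,Y_m (with m ≤ n) be jointly independent real-valued random variables with continuous cumulative distribution functions, and suppose there is an injection σ : {1,…,m} → {1,…,n} such that Y_j has the same distribution as X_{σ(j)} for every j. Then the probability that the overall maximum of (X_1,…,X_n, Y_1,…,Y_m) is attained by one of the Y_j is at most 1/2. -/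
open MeasureTheory ProbabilityTheory Filter Topology

/-- A finite measure on `ℝ` with continuous cdf has no atoms. -/
lemma cont_cdf_no_atom {μ : Measure ℝ} [IsFiniteMeasure μ]
    (h : Continuous fun x : ℝ => (μ (Set.Iic x)).toReal) (y : ℝ) : μ {y} = 0 := by
  have key : ∀ x ∈ Set.Iio y,
      (μ {y}).toReal ≤ (μ (Set.Iic y)).toReal - (μ (Set.Iic x)).toReal := by
    intro x hx
    have hx' : x < y := hx
    have hsub : Set.Iic x ⊆ Set.Iic y := Set.Iic_subset_Iic.2 hx'.le
    have h1 : μ {y} ≤ μ (Set.Iic y) - μ (Set.Iic x) := by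
      rw [← measure_diff hsub measurableSet_Iic.nullMeasurableSet (measure_ne_top μ _)]
      refine measure_mono ?_
      intro z hz
      rcases hz with rfl
      exact ⟨Set.mem_Iic.2 le_rfl, fun hc => absurd (Set.mem_Iic.1 hc) (not_le.2 hx')⟩
    calc (μ {y}).toReal ≤ (μ (Set.Iic y) - μ (Set.Iic x)).toReal := by
          exact ENNReal.toReal_mono
            (by simpa using ENNReal.sub_ne_top (measure_ne_top μ _)) h1
      _ = (μ (Set.Iic y)).toReal - (μ (Set.Iic x)).toReal :=
          ENNReal.toReal_sub_of_le (measure_mono hsub) (measure_ne_top μ _)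
  have hlim : Tendsto (fun x => (μ (Set.Iic y)).toReal - (μ (Set.Iic x)).toReal)
      (𝓝[<] y) (𝓝 0) := by
    have h2 := (h.tendsto y).mono_left (nhdsWithin_le_nhds (s := Set.Iio y))
    have := tendsto_const_nhds (x := (μ (Set.Iic y)).toReal)
      (f := 𝓝[<] y) |>.sub h2
    simpa using this
  have hle : (μ {y}).toReal ≤ 0 :=
    ge_of_tendsto hlim (eventually_nhdsWithin_of_forall key)
  have : (μ {y}).toReal = 0 := le_antisymm hle ENNReal.toReal_nonneg
  rcases (ENNReal.toReal_eq_zero_iff _).1 this with h0 | htop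
  · exact h0
  · exact absurd htop (measure_ne_top μ _)

/-- Two independent real random variables, the second of which has atomless law,
are equal with probability zero. -/
lemma indep_no_tie {Ω : Type*} [MeasurableSpace Ω] {P : Measure Ω} [IsProbabilityMeasure P]
    {f g : Ω → ℝ} (hf : Measurable f) (hg : Measurable g) (h : IndepFun f g P)
    (hg0 : ∀ y : ℝ, P.map g {y} = 0) : P {ω | f ω = g ω} = 0 := by
  haveI : IsProbabilityMeasure (P.map g) := Measure.isProbabilityMeasure_map hg.aemeasurable
  haveI : IsProbabilityMeasure (P.map f) := Measure.isProbabilityMeasure_map hf.aemeasurable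
  have hjoint := (indepFun_iff_map_prod_eq_prod_map_map hf.aemeasurable hg.aemeasurable).mp h
  have hset : MeasurableSet {p : ℝ × ℝ | p.1 = p.2} :=
    measurableSet_eq_fun measurable_fst measurable_snd
  have heq : {ω | f ω = g ω} = (fun ω => (f ω, g ω)) ⁻¹' {p : ℝ × ℝ | p.1 = p.2} := rfl
  rw [heq, ← Measure.map_apply (hf.prodMk hg) hset, hjoint, Measure.prod_apply hset]
  have hz : ∀ x : ℝ, (P.map g) (Prod.mk x ⁻¹' {p : ℝ × ℝ | p.1 = p.2}) = 0 := by
    intro x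
    have : Prod.mk x ⁻¹' {p : ℝ × ℝ | p.1 = p.2} = {x} := by
      ext z; simp [eq_comm]
    rw [this]
    exact hg0 x
  simp [hg0]

/-- A duplicate bidder wins with probability at most `1/2`:
if `X 0, …, X (n-1), Y 0, …, Y (m-1)` (`m ≤ n`) are jointly independent with
continuous cdfs and each `Y j` is distributed as `X (σ j)` for an injection `σ`,
then the probability that the overall maximum is attained by one of the `Y j`
is at most `1/2`. -/
theorem prob_duplicate_attains_max_le_half
    {Ω : Type*} [MeasurableSpace Ω] (P : Measure Ω) [IsProbabilityMeasure P]
    (n m : ℕ) (hm : m ≤ n)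
    (X : Fin n → Ω → ℝ) (Y : Fin m → Ω → ℝ)
    (hXmeas : ∀ i, Measurable (X i)) (hYmeas : ∀ j, Measurable (Y j))
    (hindep : iIndepFun (m := fun _ : Fin n ⊕ Fin m => (inferInstance : MeasurableSpace ℝ))
      (Sum.elim X Y) P)
    (hXcont : ∀ i, Continuous fun x : ℝ => ((P.map (X i)) (Set.Iic x)).toReal)
    (hYcont : ∀ j, Continuous fun x : ℝ => ((P.map (Y j)) (Set.Iic x)).toReal)
    (σ : Fin m → Fin n) (hσ : Function.Injective σ)
    (hdist : ∀ j, P.map (Y j) = P.map (X (σ j))) :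
    (P {ω | ∃ j : Fin m, (∀ i : Fin n, X i ω ≤ Y j ω) ∧
        ∀ j' : Fin m, Y j' ω ≤ Y j ω}).toReal ≤ 1 / 2 := by
  classical
  set κ := (Fin n ⊕ Fin m) with hκ
  set Z : κ → Ω → ℝ := Sum.elim X Y with hZ
  have hZmeas : ∀ k, Measurable (Z k) := by
    rintro (i | j)
    · exact hXmeas i
    · exact hYmeas j
  set μ : κ → Measure ℝ := fun k => P.map (Z k) with hμ
  haveI hprob : ∀ k, IsProbabilityMeasure (μ k) := fun k =>
    Measure.isProbabilityMeasure_map (hZmeas k).aemeasurable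
  haveI hsf : ∀ k, SigmaFinite (μ k) := fun k =>
    haveI := hprob k
    @IsFiniteMeasure.toSigmaFinite _ _ (μ k) inferInstance
  set V : Ω → κ → ℝ := fun ω k => Z k ω with hVdef
  have hV : Measurable V := measurable_pi_lambda _ hZmeas
  -- the joint law is the product of the marginals
  have hmap : P.map V = Measure.pi μ := by
    refine (Measure.pi_eq fun t ht => ?_).symm
    rw [Measure.map_apply hV (MeasurableSet.univ_pi ht)]
    have hpre : V ⁻¹' Set.univ.pi t = ⋂ k, Z k ⁻¹' t k := by
      ext ω; simp [V, Set.mem_pi]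
    rw [hpre, hindep.meas_iInter (fun k => ⟨t k, ht k, rfl⟩)]
    exact Finset.prod_congr rfl fun k _ =>
      (Measure.map_apply (hZmeas k) (ht k)).symm
  -- the swapping involution
  set τ : κ → κ := fun k =>
    Sum.rec (fun i => if h : ∃ j, σ j = i then Sum.inr h.choose else Sum.inl i)
      (fun j => Sum.inl (σ j)) k with hτ
  have hτinr : ∀ j, τ (Sum.inr j) = Sum.inl (σ j) := fun j => rfl
  have hτinl : ∀ j : Fin m, τ (Sum.inl (σ j)) = Sum.inr j := by
    intro j
    have hex : ∃ j', σ j' = σ j := ⟨j, rfl⟩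
    simp only [hτ, dif_pos hex]
    exact congrArg Sum.inr (hσ hex.choose_spec)
  have hτinv : Function.Involutive τ := by
    rintro (i | j)
    · by_cases h : ∃ j, σ j = i
      · simp only [hτ, dif_pos h]
        have := h.choose_spec
        show Sum.inl (σ h.choose) = Sum.inl i
        rw [this]
      · simp only [hτ, dif_neg h]
    · rw [hτinr, hτinl]
  set e : Equiv.Perm κ := Function.Involutive.toPerm τ hτinv with he
  have hecoe : (e : κ → κ) = τ := rfl
  have hesymm : (e.symm : κ → κ) = τ := rfl
  -- marginals invariant under e
  have hμe : ∀ k, μ (e k) = μ k := by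
    rintro (i | j)
    · by_cases h : ∃ j, σ j = i
      · have h1 : e (Sum.inl i) = Sum.inr h.choose := by
          show τ (Sum.inl i) = _
          simp only [hτ, dif_pos h]
        rw [h1]
        show P.map (Y h.choose) = P.map (X i)
        rw [hdist h.choose, h.choose_spec]
      · have h1 : e (Sum.inl i) = Sum.inl i := by
          show τ (Sum.inl i) = _
          simp only [hτ, dif_neg h]
        rw [h1]
    · have h1 : e (Sum.inr j) = Sum.inl (σ j) := hτinr j
      rw [h1]
      show P.map (X (σ j)) = P.map (Y j)
      exact (hdist j).symm
  -- the measurable equiv on the function space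
  set T : (κ → ℝ) → (κ → ℝ) := fun f k => f (e.symm k) with hT
  have hTmeas : Measurable T :=
    measurable_pi_lambda _ fun k => measurable_pi_apply _
  have hTpres : (Measure.pi μ).map T = Measure.pi μ := by
    have h1 := MeasureTheory.measurePreserving_piCongrLeft (μ := μ)
      (α := fun _ : κ => ℝ) e
    have h2 : (fun k => μ (e k)) = μ := funext hμe
    rw [h2] at h1
    have h3 : (⇑(MeasurableEquiv.piCongrLeft (fun _ : κ => ℝ) e)) = T := by
      funext f k
      rw [MeasurableEquiv.coe_piCongrLeft, Equiv.piCongrLeft_apply_eq_cast]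
      rfl
    rw [← h3]
    exact h1.map_eq
  -- the two events in the function space
  set SA : Set (κ → ℝ) := {f | ∃ j : Fin m, ∀ k, f k ≤ f (Sum.inr j)} with hSA
  set SB : Set (κ → ℝ) := {f | ∃ j : Fin m, ∀ k, f k ≤ f (Sum.inl (σ j))} with hSB
  have hSAm : MeasurableSet SA := by
    have hrw : SA = ⋃ j : Fin m, ⋂ k : κ, {f : κ → ℝ | f k ≤ f (Sum.inr j)} := by
      ext f; simp [hSA]
    rw [hrw]
    exact MeasurableSet.iUnion fun j => MeasurableSet.iInter fun k =>
      measurableSet_le (measurable_pi_apply k) (measurable_pi_apply (Sum.inr j))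
  have hSBm : MeasurableSet SB := by
    have hrw : SB = ⋃ j : Fin m, ⋂ k : κ, {f : κ → ℝ | f k ≤ f (Sum.inl (σ j))} := by
      ext f; simp [hSB]
    rw [hrw]
    exact MeasurableSet.iUnion fun j => MeasurableSet.iInter fun k =>
      measurableSet_le (measurable_pi_apply k) (measurable_pi_apply (Sum.inl (σ j)))
  have hTpre : T ⁻¹' SA = SB := by
    ext f
    simp only [hT, hSA, hSB, Set.mem_preimage, Set.mem_setOf_eq, hesymm]
    constructor
    · rintro ⟨j, hj⟩
      refine ⟨j, fun k => ?_⟩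
      have := hj (τ k)
      rwa [hτinv k, hτinr] at this
    · rintro ⟨j, hj⟩
      exact ⟨j, fun k => by rw [hτinr]; exact hj (τ k)⟩
  -- measure equality of the two events
  have hABeq : Measure.pi μ SA = Measure.pi μ SB := by
    conv_lhs => rw [← hTpres]
    rw [Measure.map_apply hTmeas hSAm, hTpre]
  set A : Set Ω := V ⁻¹' SA with hA
  set B : Set Ω := V ⁻¹' SB with hB
  have hAm : MeasurableSet A := hV hSAm
  have hBm : MeasurableSet B := hV hSBm
  have hPA : P A = Measure.pi μ SA := by
    rw [hA, ← Measure.map_apply hV hSAm, hmap]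
  have hPB : P B = Measure.pi μ SB := by
    rw [hB, ← Measure.map_apply hV hSBm, hmap]
  have hPAB : P A = P B := by rw [hPA, hPB, hABeq]
  -- the target set equals A
  have hset : {ω | ∃ j : Fin m, (∀ i : Fin n, X i ω ≤ Y j ω) ∧
      ∀ j' : Fin m, Y j' ω ≤ Y j ω} = A := by
    ext ω
    simp only [hA, hSA, Set.mem_preimage, Set.mem_setOf_eq, hVdef]
    constructor
    · rintro ⟨j, h1, h2⟩
      refine ⟨j, fun k => ?_⟩
      cases k with
      | inl i => exact h1 i
      | inr j' => exact h2 j'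
    · rintro ⟨j, hj⟩
      exact ⟨j, fun i => hj (Sum.inl i), fun j' => hj (Sum.inr j')⟩
  -- ties have probability zero
  have hXatomless : ∀ i y, P.map (X i) ({y} : Set ℝ) = 0 := by
    intro i y
    haveI : IsProbabilityMeasure (P.map (X i)) :=
      Measure.isProbabilityMeasure_map (hXmeas i).aemeasurable
    exact cont_cdf_no_atom (hXcont i) y
  have htie : ∀ (j : Fin m) (j' : Fin m), P {ω | Y j ω = X (σ j') ω} = 0 := by
    intro j j'
    have hne : (Sum.inr j : κ) ≠ Sum.inl (σ j') := by simp
    have hind : IndepFun (Y j) (X (σ j')) P := hindep.indepFun hne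
    exact indep_no_tie (hYmeas j) (hXmeas (σ j')) hind (hXatomless (σ j'))
  have hAB0 : P (A ∩ B) = 0 := by
    have hsub : A ∩ B ⊆ ⋃ j : Fin m, ⋃ j' : Fin m, {ω | Y j ω = X (σ j') ω} := by
      rintro ω ⟨hωA, hωB⟩
      simp only [hA, hB, hSA, hSB, Set.mem_preimage, Set.mem_setOf_eq, hVdef] at hωA hωB
      obtain ⟨j, hj⟩ := hωA
      obtain ⟨j', hj'⟩ := hωB
      refine Set.mem_iUnion.2 ⟨j, Set.mem_iUnion.2 ⟨j', ?_⟩⟩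
      exact le_antisymm (hj' (Sum.inr j)) (hj (Sum.inl (σ j')))
    refine le_antisymm ?_ (zero_le)
    calc P (A ∩ B) ≤ P (⋃ j : Fin m, ⋃ j' : Fin m, {ω | Y j ω = X (σ j') ω}) :=
          measure_mono hsub
      _ = 0 := by
          refine measure_iUnion_null fun j => measure_iUnion_null fun j' => htie j j'
  -- conclude
  have hsum : P A + P A ≤ 1 := by
    calc P A + P A = P A + P B := by rw [hPAB]
      _ = P (A ∪ B) + P (A ∩ B) := (measure_union_add_inter A hBm).symm
      _ = P (A ∪ B) := by rw [hAB0, add_zero]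
      _ ≤ 1 := prob_le_one
  have hfin : P A ≠ ⊤ := measure_ne_top P A
  have h2 : (P A).toReal + (P A).toReal ≤ 1 := by
    have := ENNReal.toReal_mono (by simp) hsum
    rwa [ENNReal.toReal_add hfin hfin, ENNReal.toReal_one] at this
  rw [hset]
  linarith
end

section
/- Let F be any probability distribution on [0,∞) and let 0 ≤ k < n. Then the optimal revenue obtainable from n − k bidders with values drawn i.i.d. from F is at least (1 − k/n) times the optimal revenue obtainable from n bidders with values drawn i.i.d. from F: OPT(F,…,F; n−k bidders) ≥ (1 − k/n) · OPT(F,…,F; n bidders). -/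
open MeasureTheory ProbabilityTheory Real Finset

noncomputable section OptAuxSec

namespace OptAux

attribute [local instance] Classical.propDecidable

/-- The zero mechanism. -/
def zeroMech (n : ℕ) : Mechanism n where
  alloc _ _ := 0
  pay _ _ := 0
  alloc_meas _ := measurable_const
  pay_meas _ := measurable_const
  alloc_bool _ _ := Or.inl rfl
  alloc_sum_le_one _ := by simp
  pay_nonneg _ _ := le_refl 0
  truthful _ _ _ _ _ := by simp
  ir _ _ _ := by simp

instance (n : ℕ) : Nonempty (Mechanism n) := ⟨zeroMech n⟩

/-- Revenue of a mechanism with all values i.i.d. from `F`. -/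
def rev (n : ℕ) (F : Measure ℝ) (M : Mechanism n) : ℝ :=
  ∫ v, ∑ i, M.pay v i ∂(Measure.pi fun _ : Fin n => F)

lemma rev_nonneg {n : ℕ} {F : Measure ℝ} {M : Mechanism n} : 0 ≤ rev n F M :=
  integral_nonneg fun v => Finset.sum_nonneg fun i _ => M.pay_nonneg v i

lemma rev_zeroMech (n : ℕ) (F : Measure ℝ) : rev n F (zeroMech n) = 0 := by
  simp [rev, zeroMech]

variable {n m k : ℕ}

/-- Glue map: place `m` present values via `e`, `k` absent values via `f`. -/
def Phi (e : Fin m → Fin n) (f : Fin k → Fin n) (p : (Fin m → ℝ) × (Fin k → ℝ)) :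
    Fin n → ℝ := fun j =>
  if h : ∃ i, e i = j then p.1 h.choose
  else if h' : ∃ i, f i = j then p.2 h'.choose else 0

lemma Phi_meas (e : Fin m → Fin n) (f : Fin k → Fin n) : Measurable (Phi e f) := by
  apply measurable_pi_lambda
  intro j
  unfold Phi
  by_cases h : ∃ i, e i = j
  · simp only [dif_pos h]
    exact (measurable_pi_apply _).comp measurable_fst
  · simp only [dif_neg h]
    by_cases h' : ∃ i, f i = j
    · simp only [dif_pos h']
      exact (measurable_pi_apply _).comp measurable_snd
    · simp only [dif_neg h']
      exact measurable_const

lemma Phi_apply_e {e : Fin m → Fin n} (f : Fin k → Fin n) (he : Function.Injective e)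
    (p : (Fin m → ℝ) × (Fin k → ℝ)) (i : Fin m) : Phi e f p (e i) = p.1 i := by
  have h : ∃ i', e i' = e i := ⟨i, rfl⟩
  simp only [Phi, dif_pos h]
  exact congrArg p.1 (he h.choose_spec)

lemma Phi_apply_f (e : Fin m → Fin n) {f : Fin k → Fin n} (hf : Function.Injective f)
    (hd : ∀ i i', e i ≠ f i') (p : (Fin m → ℝ) × (Fin k → ℝ)) (i' : Fin k) :
    Phi e f p (f i') = p.2 i' := by
  have h : ¬ ∃ i, e i = f i' := fun ⟨i, hi⟩ => hd i i' hi
  have h' : ∃ i, f i = f i' := ⟨i', rfl⟩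
  simp only [Phi, dif_neg h, dif_pos h']
  exact congrArg p.2 (hf h'.choose_spec)

lemma Phi_nonneg (e : Fin m → Fin n) (f : Fin k → Fin n) {w : Fin m → ℝ} {c : Fin k → ℝ}
    (hw : ∀ i, 0 ≤ w i) (hc : ∀ i, 0 ≤ c i) : ∀ j, 0 ≤ Phi e f (w, c) j := by
  intro j
  unfold Phi
  by_cases h : ∃ i, e i = j
  · simp only [dif_pos h]; exact hw _
  · simp only [dif_neg h]
    by_cases h' : ∃ i, f i = j
    · simp only [dif_pos h']; exact hc _
    · simp only [dif_neg h']; exact le_refl 0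

lemma Phi_update {e : Fin m → Fin n} (f : Fin k → Fin n) (he : Function.Injective e)
    (w : Fin m → ℝ) (c : Fin k → ℝ) (i : Fin m) (b : ℝ) :
    Phi e f (Function.update w i b, c) = Function.update (Phi e f (w, c)) (e i) b := by
  funext j
  rcases eq_or_ne j (e i) with rfl | hne
  · rw [Function.update_self, Phi_apply_e f he]; simp
  · rw [Function.update_of_ne hne]
    by_cases h : ∃ i', e i' = j
    · simp only [Phi, dif_pos h]
      have hci : h.choose ≠ i := by
        intro hc
        exact hne (by rw [← h.choose_spec, hc])
      exact Function.update_of_ne hci _ _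
    · simp only [Phi, dif_neg h]

lemma Phi_map (F : Measure ℝ) [IsProbabilityMeasure F]
    (e : Fin m → Fin n) (f : Fin k → Fin n) (he : Function.Injective e)
    (hf : Function.Injective f) (hd : ∀ i i', e i ≠ f i')
    (hcover : ∀ j, (∃ i, e i = j) ∨ ∃ i', f i' = j) :
    Measure.map (Phi e f)
      ((Measure.pi fun _ : Fin m => F).prod (Measure.pi fun _ : Fin k => F)) =
      Measure.pi fun _ : Fin n => F := by
  refine (Measure.pi_eq fun s hs => ?_).symm
  rw [Measure.map_apply (Phi_meas e f) (MeasurableSet.univ_pi hs)]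
  have hpre : Phi e f ⁻¹' Set.pi Set.univ s =
      (Set.pi Set.univ fun i => s (e i)) ×ˢ (Set.pi Set.univ fun i' => s (f i')) := by
    ext ⟨w, c⟩
    simp only [Set.mem_preimage, Set.mem_pi, Set.mem_univ, forall_true_left, Set.mem_prod,
      true_implies]
    constructor
    · intro h
      refine ⟨fun i => ?_, fun i' => ?_⟩
      · have := h (e i); rwa [Phi_apply_e f he] at this
      · have := h (f i'); rwa [Phi_apply_f e hf hd] at this
    · rintro ⟨h1, h2⟩ j
      rcases hcover j with ⟨i, rfl⟩ | ⟨i', rfl⟩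
      · rw [Phi_apply_e f he]; exact h1 i
      · rw [Phi_apply_f e hf hd]; exact h2 i'
  rw [hpre, Measure.prod_prod, Measure.pi_pi, Measure.pi_pi]
  have himg : Disjoint (Finset.univ.image e) (Finset.univ.image f) := by
    rw [Finset.disjoint_left]
    rintro j hj hj'
    obtain ⟨i, _, rfl⟩ := Finset.mem_image.1 hj
    obtain ⟨i', _, hi'⟩ := Finset.mem_image.1 hj'
    exact hd i i' hi'.symm
  have huniv : (Finset.univ.image e) ∪ (Finset.univ.image f) = Finset.univ := by
    refine Finset.eq_univ_iff_forall.2 fun j => ?_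
    rcases hcover j with ⟨i, rfl⟩ | ⟨i', rfl⟩
    · exact Finset.mem_union_left _ (Finset.mem_image_of_mem _ (Finset.mem_univ i))
    · exact Finset.mem_union_right _ (Finset.mem_image_of_mem _ (Finset.mem_univ i'))
  rw [show ∏ j : Fin n, F (s j) = ∏ j ∈ (Finset.univ.image e ∪ Finset.univ.image f), F (s j) by
      rw [huniv],
    Finset.prod_union himg,
    Finset.prod_image (fun a _ b _ hab => he hab),
    Finset.prod_image (fun a _ b _ hab => hf hab)]

lemma extract_map (F : Measure ℝ) [IsProbabilityMeasure F]
    (e : Fin m → Fin n) (f : Fin k → Fin n) (he : Function.Injective e)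
    (hf : Function.Injective f) (hd : ∀ i i', e i ≠ f i')
    (hcover : ∀ j, (∃ i, e i = j) ∨ ∃ i', f i' = j) :
    Measure.map (fun v : Fin n → ℝ => fun i => v (e i)) (Measure.pi fun _ : Fin n => F) =
      Measure.pi fun _ : Fin m => F := by
  have hext : Measurable fun v : Fin n → ℝ => fun i => v (e i) :=
    measurable_pi_lambda _ fun i => measurable_pi_apply _
  rw [← Phi_map F e f he hf hd hcover, Measure.map_map hext (Phi_meas e f)]
  have hcomp : ((fun v : Fin n → ℝ => fun i => v (e i)) ∘ Phi e f) = Prod.fst := by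
    funext p
    funext i
    exact Phi_apply_e f he p i
  rw [hcomp, Measure.map_fst_prod]
  simp

/-- Restriction of an `n`-bidder mechanism to `m` bidders via a gluing map `g`. -/
def restrictMech (M : Mechanism n) (e : Fin m → Fin n) (he : Function.Injective e)
    (g : (Fin m → ℝ) → Fin n → ℝ) (hg : Measurable g)
    (hg_apply : ∀ w i, g w (e i) = w i)
    (hg_nonneg : ∀ w, (∀ i, 0 ≤ w i) → ∀ j, 0 ≤ g w j)
    (hg_update : ∀ w i b, g (Function.update w i b) = Function.update (g w) (e i) b) :
    Mechanism m where
  alloc w i := M.alloc (g w) (e i)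
  pay w i := M.pay (g w) (e i)
  alloc_meas i := (M.alloc_meas (e i)).comp hg
  pay_meas i := (M.pay_meas (e i)).comp hg
  alloc_bool w i := M.alloc_bool (g w) (e i)
  alloc_sum_le_one w := by
    refine le_trans ?_ (M.alloc_sum_le_one (g w))
    have h1 : ∑ i : Fin m, M.alloc (g w) (e i) =
        ∑ j ∈ Finset.univ.image e, M.alloc (g w) j :=
      (Finset.sum_image (fun a _ b _ hab => he hab)).symm
    rw [h1]
    refine Finset.sum_le_sum_of_subset_of_nonneg (Finset.subset_univ _) ?_
    intro j _ _
    rcases M.alloc_bool (g w) j with h | h <;> simp [h]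
  pay_nonneg w i := M.pay_nonneg (g w) (e i)
  truthful w hw i b hb := by
    have h := M.truthful (g w) (hg_nonneg w hw) (e i) b hb
    rw [← hg_update w i b, hg_apply w i] at h
    simpa using h
  ir w hw i := by
    have h := M.ir (g w) (hg_nonneg w hw) (e i)
    rw [hg_apply w i] at h
    simpa using h

lemma sum_dite_range {e : Fin m → Fin n} (he : Function.Injective e) (Q : Fin m → ℝ) :
    ∑ j : Fin n, (if h : ∃ i, e i = j then Q h.choose else 0) = ∑ i, Q i := by
  have h1 : ∑ j ∈ Finset.univ.image e, (if h : ∃ i, e i = j then Q h.choose else 0) =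
      ∑ j : Fin n, (if h : ∃ i, e i = j then Q h.choose else 0) := by
    refine Finset.sum_subset (Finset.subset_univ _) ?_
    intro j _ hj
    rw [dif_neg]
    rintro ⟨i, hi⟩
    exact hj (Finset.mem_image.2 ⟨i, Finset.mem_univ _, hi⟩)
  rw [← h1, Finset.sum_image (fun a _ b _ hab => he hab)]
  refine Finset.sum_congr rfl fun i _ => ?_
  have hex : ∃ i', e i' = e i := ⟨i, rfl⟩
  rw [dif_pos hex]
  exact congrArg Q (he hex.choose_spec)

/-- Lift an `m`-bidder mechanism to `n` bidders (the extra bidders are ignored). -/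
def liftMech (M : Mechanism m) (e : Fin m → Fin n) (he : Function.Injective e) :
    Mechanism n where
  alloc v j := if h : ∃ i, e i = j then M.alloc (fun i => v (e i)) h.choose else 0
  pay v j := if h : ∃ i, e i = j then M.pay (fun i => v (e i)) h.choose else 0
  alloc_meas j := by
    by_cases h : ∃ i, e i = j
    · simp only [dif_pos h]
      exact (M.alloc_meas _).comp (measurable_pi_lambda _ fun i => measurable_pi_apply _)
    · simp only [dif_neg h]; exact measurable_const
  pay_meas j := by
    by_cases h : ∃ i, e i = j
    · simp only [dif_pos h]
      exact (M.pay_meas _).comp (measurable_pi_lambda _ fun i => measurable_pi_apply _)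
    · simp only [dif_neg h]; exact measurable_const
  alloc_bool v j := by
    by_cases h : ∃ i, e i = j
    · simp only [dif_pos h]; exact M.alloc_bool _ _
    · simp [h]
  alloc_sum_le_one v := by
    rw [sum_dite_range he (fun i => M.alloc (fun i' => v (e i')) i)]
    exact M.alloc_sum_le_one _
  pay_nonneg v j := by
    by_cases h : ∃ i, e i = j
    · simp only [dif_pos h]; exact M.pay_nonneg _ _
    · simp only [dif_neg h]; exact le_refl 0
  truthful v hv j b hb := by
    by_cases h : ∃ i, e i = j
    · obtain ⟨i, rfl⟩ := h
      have hext : ∀ b', (fun i' => Function.update v (e i) b' (e i')) =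
          Function.update (fun i' => v (e i')) i b' := by
        intro b'
        funext i'
        simp [Function.update_apply, he.eq_iff]
      have hex : ∃ i', e i' = e i := ⟨i, rfl⟩
      have hch : hex.choose = i := he hex.choose_spec
      simp only [dif_pos hex, hch, hext]
      exact M.truthful (fun i' => v (e i')) (fun i' => hv (e i')) i b hb
    · have hupd : (fun i' => Function.update v j b (e i')) = fun i' => v (e i') := by
        funext i'
        exact Function.update_of_ne (fun hc => h ⟨i', hc⟩) _ _
      simp only [dif_neg h, hupd, mul_zero, sub_zero, le_refl]
  ir v hv j := by
    by_cases h : ∃ i, e i = j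
    · obtain ⟨i, rfl⟩ := h
      have hex : ∃ i', e i' = e i := ⟨i, rfl⟩
      have hch : hex.choose = i := he hex.choose_spec
      have := M.ir (fun i' => v (e i')) (fun i' => hv (e i')) i
      simp only [dif_pos hex, hch]
      simpa using this
    · simp only [dif_neg h, mul_zero, sub_zero, le_refl]

lemma rev_lift (F : Measure ℝ) [IsProbabilityMeasure F] (M : Mechanism m)
    (e : Fin m → Fin n) (he : Function.Injective e)
    (hmap : Measure.map (fun v : Fin n → ℝ => fun i => v (e i))
      (Measure.pi fun _ : Fin n => F) = Measure.pi fun _ : Fin m => F) :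
    rev n F (liftMech M e he) = rev m F M := by
  have hext : Measurable fun v : Fin n → ℝ => fun i => v (e i) :=
    measurable_pi_lambda _ fun i => measurable_pi_apply _
  have hsm : Measurable fun w : Fin m → ℝ => ∑ i, M.pay w i :=
    Finset.measurable_sum _ fun i _ => M.pay_meas i
  have h1 : rev m F M =
      ∫ v, (∑ i, M.pay (fun i' => v (e i')) i) ∂(Measure.pi fun _ : Fin n => F) := by
    unfold rev
    rw [← hmap, integral_map hext.aemeasurable hsm.aestronglyMeasurable]
  rw [h1]
  unfold rev
  refine integral_congr_ae (Filter.Eventually.of_forall fun v => ?_)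
  exact (sum_dite_range he (fun i => M.pay (fun i' => v (e i')) i))

/-- Window of `m` consecutive positions (cyclically) starting offset `t`. -/
def eW (h : m + k = n) (t : Fin n) : Fin m → Fin n :=
  fun i => Fin.cast h (Fin.castAdd k i) + t

def fW (h : m + k = n) (t : Fin n) : Fin k → Fin n :=
  fun i => Fin.cast h (Fin.natAdd m i) + t

lemma eW_inj [NeZero n] (h : m + k = n) (t : Fin n) : Function.Injective (eW h t) := by
  intro a b hab
  have h2 := add_left_injective t hab
  have h3 := congrArg Fin.val h2
  simp only [Fin.coe_cast, Fin.coe_castAdd] at h3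
  exact Fin.ext h3

lemma fW_inj [NeZero n] (h : m + k = n) (t : Fin n) : Function.Injective (fW h t) := by
  intro a b hab
  have h2 := add_left_injective t hab
  have h3 := congrArg Fin.val h2
  simp only [Fin.coe_cast, Fin.coe_natAdd] at h3
  exact Fin.ext (by omega)

lemma eW_ne_fW [NeZero n] (h : m + k = n) (t : Fin n) (i : Fin m) (i' : Fin k) :
    eW h t i ≠ fW h t i' := by
  intro hEq
  have h2 := add_left_injective t hEq
  have h3 := congrArg Fin.val h2
  simp only [Fin.coe_cast, Fin.coe_castAdd, Fin.coe_natAdd] at h3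
  have := i.isLt
  omega

lemma eW_fW_cover [NeZero n] (h : m + k = n) (t : Fin n) (j : Fin n) :
    (∃ i, eW h t i = j) ∨ ∃ i', fW h t i' = j := by
  set d : Fin (m + k) := Fin.cast h.symm (j - t) with hd
  have hdval : (d : ℕ) = ((j - t : Fin n) : ℕ) := by simp [hd]
  by_cases hdm : (d : ℕ) < m
  · left
    refine ⟨⟨(d : ℕ), hdm⟩, ?_⟩
    have hc : Fin.cast h (Fin.castAdd k ⟨(d : ℕ), hdm⟩) = j - t := by
      apply Fin.ext
      simp [hdval]
    rw [eW, hc, sub_add_cancel]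
  · right
    have hdlt := d.isLt
    refine ⟨⟨(d : ℕ) - m, by omega⟩, ?_⟩
    have hc : Fin.cast h (Fin.natAdd m ⟨(d : ℕ) - m, by omega⟩) = j - t := by
      apply Fin.ext
      simp only [Fin.coe_cast, Fin.coe_natAdd]
      omega
    rw [fW, hc, sub_add_cancel]

lemma window_sum [NeZero n] (h : m + k = n) (I : Fin n → ℝ) :
    ∑ t : Fin n, ∑ i : Fin m, I (eW h t i) = (m : ℝ) * ∑ j, I j := by
  rw [Finset.sum_comm]
  have h2 : ∀ i : Fin m, ∑ t : Fin n, I (eW h t i) = ∑ j, I j := by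
    intro i
    exact Fintype.sum_equiv (Equiv.addLeft (Fin.cast h (Fin.castAdd k i))) _ _ (fun t => rfl)
  rw [Finset.sum_congr rfl fun i _ => h2 i, Finset.sum_const, Finset.card_univ,
    Fintype.card_fin, nsmul_eq_mul]

lemma exists_window [NeZero n] (h : m + k = n) (I : Fin n → ℝ) :
    ∃ t : Fin n, (m : ℝ) / n * ∑ j, I j ≤ ∑ i : Fin m, I (eW h t i) := by
  by_contra hc
  push_neg at hc
  have hsum := Finset.sum_lt_sum_of_nonempty (Finset.univ_nonempty (α := Fin n))
    (fun t _ => hc t)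
  rw [window_sum h I, Finset.sum_const, Finset.card_univ, Fintype.card_fin,
    nsmul_eq_mul] at hsum
  have hn : (n : ℝ) ≠ 0 := Nat.cast_ne_zero.mpr (NeZero.ne n)
  rw [show (n : ℝ) * ((m : ℝ) / n * ∑ j, I j) = (m : ℝ) * ∑ j, I j by field_simp]
    at hsum
  exact lt_irrefl _ hsum

end OptAux

end OptAuxSec

/-- Dropping `k` of `n` i.i.d. bidders loses at most a `k/n`
fraction of the optimal revenue: for any probability distribution `F` on `[0,∞)`
and `0 ≤ k < n`, `OPT(n - k bidders) ≥ (1 - k/n)·OPT(n bidders)`. -/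
theorem optRevenue_subset_iid
    (F : MeasureTheory.Measure ℝ) (hFprob : MeasureTheory.IsProbabilityMeasure F)
    (hFsupp : F (Set.Iio 0) = 0)
    (n k : ℕ) (hk : k < n) :
    (1 - (k : ℝ) / n) * optRevenue n (fun _ => F) ≤
      optRevenue (n - k) (fun _ => F) := by
  classical
  haveI := hFprob
  haveI : NeZero n := ⟨(Nat.zero_lt_of_lt hk).ne'⟩
  set m := n - k with hmdef
  have hmk : m + k = n := Nat.sub_add_cancel hk.le
  have hmpos : 0 < m := Nat.sub_pos_of_lt hk
  have hnpos : (0:ℝ) < n := by exact_mod_cast Nat.pos_of_ne_zero (NeZero.ne n)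
  have hcoeff : (1 : ℝ) - (k:ℝ) / n = (m : ℝ) / n := by
    rw [hmdef, Nat.cast_sub hk.le]
    field_simp
  have hoptn : optRevenue n (fun _ => F) = ⨆ M, OptAux.rev n F M := rfl
  have hoptm : optRevenue m (fun _ => F) = ⨆ M, OptAux.rev m F M := rfl
  by_cases hB : BddAbove (Set.range fun M : Mechanism m => OptAux.rev m F M)
  · have hopt_nonneg : (0:ℝ) ≤ ⨆ M, OptAux.rev m F M := by
      have h0 := le_ciSup hB (OptAux.zeroMech m)
      rwa [OptAux.rev_zeroMech] at h0
    have key : ∀ M : Mechanism n, (m:ℝ)/n * OptAux.rev n F M ≤ ⨆ M', OptAux.rev m F M' := by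
      intro M
      by_cases hInt : Integrable (fun v => ∑ i, M.pay v i) (Measure.pi fun _ : Fin n => F)
      swap
      · have h0 : OptAux.rev n F M = 0 := integral_undef hInt
        rw [h0, mul_zero]; exact hopt_nonneg
      · have hpay_int : ∀ j, Integrable (fun v => M.pay v j)
            (Measure.pi fun _ : Fin n => F) := by
          intro j
          refine hInt.mono' (M.pay_meas j).aestronglyMeasurable ?_
          refine Filter.Eventually.of_forall fun v => ?_
          rw [Real.norm_eq_abs, abs_of_nonneg (M.pay_nonneg v j)]
          exact Finset.single_le_sum (fun i _ => M.pay_nonneg v i) (Finset.mem_univ j)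
        set I : Fin n → ℝ := fun j => ∫ v, M.pay v j ∂(Measure.pi fun _ : Fin n => F) with hI
        have hR : OptAux.rev n F M = ∑ j, I j :=
          integral_finset_sum Finset.univ (fun j _ => hpay_int j)
        obtain ⟨t, ht⟩ := OptAux.exists_window hmk I
        set e := OptAux.eW hmk t with hedef
        set f := OptAux.fW hmk t with hfdef
        have he : Function.Injective e := OptAux.eW_inj hmk t
        have hf : Function.Injective f := OptAux.fW_inj hmk t
        have hd : ∀ i i', e i ≠ f i' := fun i i' => OptAux.eW_ne_fW hmk t i i'
        have hcover : ∀ j, (∃ i, e i = j) ∨ ∃ i', f i' = j := OptAux.eW_fW_cover hmk t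
        have hmap := OptAux.Phi_map F e f he hf hd hcover
        set G : (Fin n → ℝ) → ℝ := fun v => ∑ i : Fin m, M.pay v (e i) with hG
        have hGmeas : Measurable G := Finset.measurable_sum _ fun i _ => M.pay_meas (e i)
        have hGint : Integrable G (Measure.pi fun _ : Fin n => F) :=
          integrable_finset_sum _ fun i _ => hpay_int (e i)
        have hIG : (m:ℝ)/n * OptAux.rev n F M ≤
            ∫ v, G v ∂(Measure.pi fun _ : Fin n => F) := by
          rw [hR]
          have hGsum : ∫ v, G v ∂(Measure.pi fun _ : Fin n => F) = ∑ i : Fin m, I (e i) :=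
            integral_finset_sum _ fun i _ => hpay_int (e i)
          rw [hGsum]
          exact ht
        have hGPhiInt : Integrable (fun p => G (OptAux.Phi e f p))
            ((Measure.pi fun _ : Fin m => F).prod (Measure.pi fun _ : Fin k => F)) := by
          have h2 := hGint
          rw [← hmap] at h2
          exact (integrable_map_measure hGmeas.aestronglyMeasurable
            (OptAux.Phi_meas e f).aemeasurable).mp h2
        have hsplit : ∫ v, G v ∂(Measure.pi fun _ : Fin n => F) =
            ∫ c, (∫ w, G (OptAux.Phi e f (w, c)) ∂(Measure.pi fun _ : Fin m => F))
              ∂(Measure.pi fun _ : Fin k => F) := by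
          rw [← hmap, integral_map (OptAux.Phi_meas e f).aemeasurable
            hGmeas.aestronglyMeasurable]
          exact integral_prod_symm _ hGPhiInt
        have hg_int : Integrable
            (fun c => ∫ w, G (OptAux.Phi e f (w, c)) ∂(Measure.pi fun _ : Fin m => F))
            (Measure.pi fun _ : Fin k => F) := hGPhiInt.integral_prod_right
        set N : Set (Fin k → ℝ) := {c | ¬ ∀ i, 0 ≤ c i} with hN
        have hNnull : (Measure.pi fun _ : Fin k => F) N = 0 := by
          have hsub : N ⊆ ⋃ i : Fin k, {c : Fin k → ℝ | c i < 0} := by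
            intro c hc
            have hc' : ¬ ∀ i, 0 ≤ c i := hc
            push_neg at hc'
            obtain ⟨i, hi⟩ := hc'
            exact Set.mem_iUnion.2 ⟨i, hi⟩
          refine measure_mono_null hsub (measure_iUnion_null fun i => ?_)
          have hset : {c : Fin k → ℝ | c i < 0} =
              Set.pi Set.univ (fun i' => if i' = i then Set.Iio 0 else Set.univ) := by
            ext c
            simp only [Set.mem_setOf_eq, Set.mem_pi, Set.mem_univ, true_implies]
            constructor
            · intro h i'
              by_cases hii : i' = i <;> simp [hii, h]
            · intro h
              have h2 := h i
              simpa using h2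
          rw [hset, Measure.pi_pi]
          refine Finset.prod_eq_zero (Finset.mem_univ i) ?_
          simp [hFsupp]
        obtain ⟨c, hcN, hc_ge⟩ := exists_notMem_null_integral_le hg_int hNnull
        have hc0 : ∀ i, 0 ≤ c i := by
          by_contra hcc
          exact hcN hcc
        have hgmeas : Measurable (fun w => OptAux.Phi e f (w, c)) :=
          (OptAux.Phi_meas e f).comp (measurable_id.prodMk measurable_const)
        set M' : Mechanism m := OptAux.restrictMech M e he (fun w => OptAux.Phi e f (w, c))
          hgmeas
          (fun w i => OptAux.Phi_apply_e f he (w, c) i)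
          (fun w hw j => OptAux.Phi_nonneg e f hw hc0 j)
          (fun w i b => OptAux.Phi_update f he w c i b) with hM'
        have hrev' : OptAux.rev m F M' =
            ∫ w, G (OptAux.Phi e f (w, c)) ∂(Measure.pi fun _ : Fin m => F) := rfl
        calc (m:ℝ)/n * OptAux.rev n F M
            ≤ ∫ v, G v ∂(Measure.pi fun _ : Fin n => F) := hIG
          _ = ∫ c', (∫ w, G (OptAux.Phi e f (w, c')) ∂(Measure.pi fun _ : Fin m => F))
              ∂(Measure.pi fun _ : Fin k => F) := hsplit
          _ ≤ ∫ w, G (OptAux.Phi e f (w, c)) ∂(Measure.pi fun _ : Fin m => F) := hc_ge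
          _ = OptAux.rev m F M' := hrev'.symm
          _ ≤ ⨆ M'', OptAux.rev m F M'' := le_ciSup hB M'
    rw [hcoeff, hoptn, hoptm]
    have hpos : (0:ℝ) < (m:ℝ)/n := div_pos (by exact_mod_cast hmpos) hnpos
    rw [mul_comm, ← le_div_iff₀ hpos]
    refine Real.iSup_le (fun M => ?_) (div_nonneg hopt_nonneg hpos.le)
    rw [le_div_iff₀ hpos]
    calc OptAux.rev n F M * ((m:ℝ)/n) = (m:ℝ)/n * OptAux.rev n F M := mul_comm _ _
      _ ≤ ⨆ M', OptAux.rev m F M' := key M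
  · have hBn : ¬ BddAbove (Set.range fun M : Mechanism n => OptAux.rev n F M) := by
      intro hBn'
      apply hB
      obtain ⟨B, hBub⟩ := hBn'
      refine ⟨B, ?_⟩
      rintro x ⟨M, rfl⟩
      show OptAux.rev m F M ≤ B
      have hmap := OptAux.extract_map F (OptAux.eW hmk 0) (OptAux.fW hmk 0)
        (OptAux.eW_inj hmk 0) (OptAux.fW_inj hmk 0)
        (fun i i' => OptAux.eW_ne_fW hmk 0 i i') (OptAux.eW_fW_cover hmk 0)
      have hlift := OptAux.rev_lift F M (OptAux.eW hmk 0) (OptAux.eW_inj hmk 0) hmap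
      rw [← hlift]
      exact hBub ⟨_, rfl⟩
    rw [hcoeff, hoptn, hoptm, Real.iSup_of_not_bddAbove hBn,
      Real.iSup_of_not_bddAbove hB, mul_zero]
end
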